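/- Let E ⊆ X² be a smooth idealistic Borel equivalence relation on a standard Borel space X, i.e., E = ker(f) for a Borel map f : X → Y to a standard Borel space, and E admits a family of proper sigma-ideals I_C of Borel subsets of each class C with the associated quantifier ∃^I mapping Borel subsets of E to Borel subsets of X. Then f(X) ⊆ Y is Borel and there exists a Borel map g : f(X) → X with f ∘ g = id on f(X). -/

import Mathlib

open Set

set_option linter.unusedSectionVars false

namespace Stmt19Aux

open Metric Filter Topology

variable {X Y : Type*}

/-- The recursive scheme of sets: `S q f I k x` is a subset of the class of `x`,
not in the ideal `I x`, of diameter at most `2 * (1/2)^(k-1)`. -/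
noncomputable def S [PseudoMetricSpace X] (q : ℕ → X) (f : X → Y) (I : X → Set (Set X)) :
    ℕ → X → Set X
  | 0 => fun x => {y | f y = f x}
  | (k+1) => fun x =>
      S q f I k x ∩
        closedBall (q (sInf {n | S q f I k x ∩ closedBall (q n) ((1/2 : ℝ)^k) ∉ I x}))
          ((1/2 : ℝ)^k)

/-- The index chosen at stage `k`. -/
noncomputable def N [PseudoMetricSpace X] (q : ℕ → X) (f : X → Y) (I : X → Set (Set X))
    (k : ℕ) (x : X) : ℕ :=
  sInf {n | S q f I k x ∩ closedBall (q n) ((1/2 : ℝ)^k) ∉ I x}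

section

variable [MetricSpace X] [MeasurableSpace X] [BorelSpace X] [MeasurableSpace Y]
  {q : ℕ → X} {f : X → Y} {I : X → Set (Set X)}

lemma S_zero (x : X) : S q f I 0 x = {y | f y = f x} := rfl

lemma S_succ (k : ℕ) (x : X) :
    S q f I (k+1) x = S q f I k x ∩ closedBall (q (N q f I k x)) ((1/2 : ℝ)^k) := rfl

lemma S_subset (k : ℕ) (x : X) : S q f I k x ⊆ {y | f y = f x} := by
  induction k with
  | zero => exact subset_rfl
  | succ k ih => exact Set.inter_subset_left.trans ih

lemma S_inv (hconst : ∀ x y, f x = f y → I x = I y) (k : ℕ) {x x' : X} (h : f x = f x') :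
    S q f I k x = S q f I k x' := by
  induction k with
  | zero => ext y; simp only [S_zero, mem_setOf_eq, h]
  | succ k ih => rw [S_succ, S_succ, N, N, ih, hconst x x' h]

lemma idx_nonempty (hdense : DenseRange q)
    (hunion : ∀ x, ∀ D : ℕ → Set X, (∀ n, D n ∈ I x) → (⋃ n, D n) ∈ I x)
    (k : ℕ) (x : X) (hx : S q f I k x ∉ I x) :
    {n | S q f I k x ∩ closedBall (q n) ((1/2 : ℝ)^k) ∉ I x}.Nonempty := by
  by_contra hne
  have hall : ∀ n, S q f I k x ∩ closedBall (q n) ((1/2 : ℝ)^k) ∈ I x := by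
    intro n
    by_contra hn
    exact hne ⟨n, hn⟩
  apply hx
  have hu := hunion x (fun n => S q f I k x ∩ closedBall (q n) ((1/2 : ℝ)^k)) hall
  have hcov : (⋃ n, S q f I k x ∩ closedBall (q n) ((1/2 : ℝ)^k)) = S q f I k x := by
    refine Subset.antisymm (iUnion_subset fun n => inter_subset_left) ?_
    intro y hy
    have hpos : (0:ℝ) < (1/2)^k := by positivity
    obtain ⟨n, hn⟩ := Metric.denseRange_iff.mp hdense y _ hpos
    exact mem_iUnion.2 ⟨n, hy, mem_closedBall.2 hn.le⟩
  rwa [hcov] at hu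

lemma S_pos (hdense : DenseRange q)
    (hunion : ∀ x, ∀ D : ℕ → Set X, (∀ n, D n ∈ I x) → (⋃ n, D n) ∈ I x)
    (hproper : ∀ x, {y | f y = f x} ∉ I x) :
    ∀ k (x : X), S q f I k x ∉ I x := by
  intro k
  induction k with
  | zero => exact hproper
  | succ k ih =>
    intro x
    have h := Nat.sInf_mem (idx_nonempty hdense hunion k x (ih x))
    rw [S_succ]
    exact h

lemma S_nonempty (hdense : DenseRange q)
    (hunion : ∀ x, ∀ D : ℕ → Set X, (∀ n, D n ∈ I x) → (⋃ n, D n) ∈ I x)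
    (hproper : ∀ x, {y | f y = f x} ∉ I x)
    (hempty : ∀ x, ∅ ∈ I x)
    (k : ℕ) (x : X) : (S q f I k x).Nonempty := by
  rw [nonempty_iff_ne_empty]
  intro h
  exact S_pos hdense hunion hproper k x (h ▸ hempty x)

lemma A_meas
    (hquant : ∀ U : Set (X × X), MeasurableSet U → (∀ p ∈ U, f p.1 = f p.2) →
      MeasurableSet {x | {y | (x, y) ∈ U} ∉ I x})
    (k : ℕ) (hU : MeasurableSet {p : X × X | p.2 ∈ S q f I k p.1}) (n : ℕ) :
    MeasurableSet {x | S q f I k x ∩ closedBall (q n) ((1/2 : ℝ)^k) ∉ I x} := by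
  have hUb : MeasurableSet ({p : X × X | p.2 ∈ S q f I k p.1} ∩
      {p : X × X | p.2 ∈ closedBall (q n) ((1/2 : ℝ)^k)}) :=
    hU.inter (measurable_snd measurableSet_closedBall)
  have hsub : ∀ p ∈ ({p : X × X | p.2 ∈ S q f I k p.1} ∩
      {p : X × X | p.2 ∈ closedBall (q n) ((1/2 : ℝ)^k)}), f p.1 = f p.2 :=
    fun p hp => (S_subset k p.1 hp.1).symm
  exact hquant _ hUb hsub

lemma N_meas (hdense : DenseRange q)
    (hunion : ∀ x, ∀ D : ℕ → Set X, (∀ n, D n ∈ I x) → (⋃ n, D n) ∈ I x)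
    (hproper : ∀ x, {y | f y = f x} ∉ I x)
    (hquant : ∀ U : Set (X × X), MeasurableSet U → (∀ p ∈ U, f p.1 = f p.2) →
      MeasurableSet {x | {y | (x, y) ∈ U} ∉ I x})
    (k : ℕ) (hU : MeasurableSet {p : X × X | p.2 ∈ S q f I k p.1}) :
    Measurable (N q f I k) := by
  have hA := A_meas (q := q) hquant k hU
  apply measurable_to_countable'
  intro m
  have claim : N q f I k ⁻¹' {m} =
      {x | S q f I k x ∩ closedBall (q m) ((1/2 : ℝ)^k) ∉ I x} ∩
        ⋂ (j : ℕ) (_ : j < m), {x | S q f I k x ∩ closedBall (q j) ((1/2 : ℝ)^k) ∉ I x}ᶜ := by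
    ext x
    simp only [mem_preimage, mem_singleton_iff, mem_inter_iff, mem_iInter, mem_compl_iff,
      mem_setOf_eq]
    constructor
    · rintro rfl
      have hne := idx_nonempty hdense hunion k x (S_pos hdense hunion hproper k x)
      exact ⟨Nat.sInf_mem hne, fun j hj => Nat.notMem_of_lt_sInf hj⟩
    · rintro ⟨h1, h2⟩
      refine le_antisymm (Nat.sInf_le h1) ?_
      by_contra hlt
      push_neg at hlt
      have hmem := Nat.sInf_mem
        (⟨m, h1⟩ : Set.Nonempty {n | S q f I k x ∩ closedBall (q n) ((1/2 : ℝ)^k) ∉ I x})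
      exact h2 _ hlt hmem
  rw [claim]
  exact (hA m).inter
    (MeasurableSet.iInter fun j => MeasurableSet.iInter fun _ => (hA j).compl)

lemma U_meas (hdense : DenseRange q)
    (hunion : ∀ x, ∀ D : ℕ → Set X, (∀ n, D n ∈ I x) → (⋃ n, D n) ∈ I x)
    (hproper : ∀ x, {y | f y = f x} ∉ I x)
    (hdiag : MeasurableSet {p : X × X | f p.1 = f p.2})
    (hquant : ∀ U : Set (X × X), MeasurableSet U → (∀ p ∈ U, f p.1 = f p.2) →
      MeasurableSet {x | {y | (x, y) ∈ U} ∉ I x}) :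
    ∀ k, MeasurableSet {p : X × X | p.2 ∈ S q f I k p.1} := by
  intro k
  induction k with
  | zero =>
    have : {p : X × X | p.2 ∈ S q f I 0 p.1} = Prod.swap ⁻¹' {p : X × X | f p.1 = f p.2} := by
      ext p
      simp only [S_zero, mem_setOf_eq, mem_preimage, Prod.fst_swap, Prod.snd_swap]
    rw [this]
    exact measurable_swap hdiag
  | succ k ih =>
    have hN := N_meas hdense hunion hproper hquant k ih
    have heq : {p : X × X | p.2 ∈ S q f I (k+1) p.1} =
        {p : X × X | p.2 ∈ S q f I k p.1} ∩
          ⋃ m, ({x | N q f I k x = m} ×ˢ closedBall (q m) ((1/2 : ℝ)^k)) := by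
      ext p
      simp only [S_succ, mem_inter_iff, mem_setOf_eq, mem_iUnion, mem_prod]
      constructor
      · rintro ⟨h1, h2⟩
        exact ⟨h1, N q f I k p.1, rfl, h2⟩
      · rintro ⟨h1, m, hm, h2⟩
        exact ⟨h1, by rw [hm]; exact h2⟩
    rw [heq]
    exact ih.inter (MeasurableSet.iUnion fun m =>
      (hN (measurableSet_singleton m)).prod measurableSet_closedBall)

lemma dist_qN (hdense : DenseRange q)
    (hunion : ∀ x, ∀ D : ℕ → Set X, (∀ n, D n ∈ I x) → (⋃ n, D n) ∈ I x)
    (hproper : ∀ x, {y | f y = f x} ∉ I x)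
    (hempty : ∀ x, ∅ ∈ I x)
    (k : ℕ) (x : X) :
    dist (q (N q f I k x)) (q (N q f I (k+1) x)) ≤ (3/2) * (1/2 : ℝ)^k := by
  obtain ⟨y, hy⟩ := S_nonempty hdense hunion hproper hempty (k+2) x
  rw [S_succ] at hy
  obtain ⟨hy1, hy2⟩ := hy
  rw [S_succ] at hy1
  obtain ⟨_, hy3⟩ := hy1
  have h1 : dist y (q (N q f I k x)) ≤ (1/2 : ℝ)^k := mem_closedBall.1 hy3
  have h2 : dist y (q (N q f I (k+1) x)) ≤ (1/2 : ℝ)^(k+1) := mem_closedBall.1 hy2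
  calc dist (q (N q f I k x)) (q (N q f I (k+1) x))
      ≤ dist (q (N q f I k x)) y + dist y (q (N q f I (k+1) x)) := dist_triangle _ _ _
    _ ≤ (1/2 : ℝ)^k + (1/2 : ℝ)^(k+1) := by
        rw [dist_comm (q (N q f I k x)) y]; exact add_le_add h1 h2
    _ = (3/2) * (1/2 : ℝ)^k := by ring

/-- The key construction: a Borel, `E`-invariant selector. -/
theorem exists_selector [CompleteSpace X] [SecondCountableTopology X] [Nonempty X]
    (f : X → Y) (hf : Measurable f)
    (hfib : ∀ x : X, IsClosed {y : X | f y = f x})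
    (hdiag : MeasurableSet {p : X × X | f p.1 = f p.2})
    (I : X → Set (Set X))
    (hconst : ∀ x y, f x = f y → I x = I y)
    (hempty : ∀ x, ∅ ∈ I x)
    (hunion : ∀ x, ∀ D : ℕ → Set X, (∀ n, D n ∈ I x) → (⋃ n, D n) ∈ I x)
    (hproper : ∀ x, {y | f y = f x} ∉ I x)
    (hquant : ∀ U : Set (X × X), MeasurableSet U → (∀ p ∈ U, f p.1 = f p.2) →
      MeasurableSet {x | {y | (x, y) ∈ U} ∉ I x}) :
    ∃ g : X → X, Measurable g ∧ (∀ x, f (g x) = f x) ∧ ∀ x y, f x = f y → g x = g y := by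
  set q : ℕ → X := TopologicalSpace.denseSeq X with hq
  have hdense : DenseRange q := TopologicalSpace.denseRange_denseSeq X
  -- the approximating sequence
  set u : ℕ → X → X := fun k x => q (N q f I k x) with hu
  have hcauchy : ∀ x, CauchySeq (fun k => u k x) := by
    intro x
    apply cauchySeq_of_le_geometric (1/2 : ℝ) (3/2) (by norm_num)
    intro n
    exact dist_qN hdense hunion hproper hempty n x
  set g : X → X := fun x => limUnder atTop (fun k => u k x) with hg
  have htend : ∀ x, Tendsto (fun k => u k x) atTop (𝓝 (g x)) := fun x =>
    (hcauchy x).tendsto_limUnder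
  have humeas : ∀ k, Measurable (u k) := fun k =>
    measurable_from_top.comp
      (N_meas hdense hunion hproper hquant k (U_meas hdense hunion hproper hdiag hquant k))
  have hgmeas : Measurable g :=
    measurable_of_tendsto_metrizable humeas (tendsto_pi_nhds.2 htend)
  have hgfix : ∀ x, f (g x) = f x := by
    intro x
    set y : ℕ → X := fun k => (S_nonempty hdense hunion hproper hempty (k+1) x).choose with hy
    have hyS : ∀ k, y k ∈ S q f I (k+1) x := fun k =>
      (S_nonempty hdense hunion hproper hempty (k+1) x).choose_spec
    have hyd : ∀ k, dist (y k) (u k x) ≤ (1/2 : ℝ)^k := by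
      intro k
      have := hyS k
      rw [S_succ] at this
      exact mem_closedBall.1 this.2
    have hytend : Tendsto y atTop (𝓝 (g x)) := by
      rw [tendsto_iff_dist_tendsto_zero]
      have hb : ∀ k, dist (y k) (g x) ≤ (1/2 : ℝ)^k + dist (u k x) (g x) := by
        intro k
        calc dist (y k) (g x) ≤ dist (y k) (u k x) + dist (u k x) (g x) := dist_triangle _ _ _
          _ ≤ (1/2 : ℝ)^k + dist (u k x) (g x) := by
              exact add_le_add (hyd k) le_rfl
      have hlim : Tendsto (fun k => (1/2 : ℝ)^k + dist (u k x) (g x)) atTop (𝓝 0) := by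
        have h1 : Tendsto (fun k => ((1:ℝ)/2)^k) atTop (𝓝 0) :=
          tendsto_pow_atTop_nhds_zero_of_lt_one (by norm_num) (by norm_num)
        have h2 : Tendsto (fun k => dist (u k x) (g x)) atTop (𝓝 0) :=
          tendsto_iff_dist_tendsto_zero.1 (htend x)
        simpa using h1.add h2
      exact squeeze_zero (fun k => dist_nonneg) hb hlim
    have : g x ∈ {z : X | f z = f x} :=
      (hfib x).mem_of_tendsto hytend
        (Filter.Eventually.of_forall fun k => S_subset (k+1) x (hyS k))
    exact this
  refine ⟨g, hgmeas, hgfix, ?_⟩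
  intro x x' h
  have hN : ∀ k, N q f I k x = N q f I k x' := by
    intro k
    unfold N
    rw [S_inv hconst k h, hconst x x' h]
  have : (fun k => u k x) = fun k => u k x' := by
    funext k
    simp only [hu, hN k]
  simp only [hg, this]

end

end Stmt19Aux

/-- A type synonym used to install the finer Polish topology on `X`. -/
def Stmt19Copy (X : Type*) : Type _ := X

/-- Kechris's large section uniformization. Let `E = ker f` be a
smooth Borel equivalence relation on a standard Borel space `X`, where
`f : X → Y` is Borel into a standard Borel space. Suppose `E` is idealistic, as
witnessed by a family `I x` of proper sigma-ideals of Borel subsets of each class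
`[x]_E = {y : f y = f x}` (constant on classes), whose associated quantifier maps
Borel subsets of `E` to Borel subsets of `X`. Then `f(X) ⊆ Y` is Borel, and there
is a Borel section `g : f(X) → X` with `f ∘ g = id`. -/
theorem stmt_19 {X Y : Type*} [MeasurableSpace X] [StandardBorelSpace X]
    [MeasurableSpace Y] [StandardBorelSpace Y]
    (f : X → Y) (hf : Measurable f)
    (I : X → Set (Set X))
    (hclass : ∀ x, ∀ D ∈ I x, D ⊆ {y | f y = f x})
    (hconst : ∀ x y, f x = f y → I x = I y)
    (hborel : ∀ x, ∀ D ∈ I x, MeasurableSet D)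
    (hempty : ∀ x, ∅ ∈ I x)
    (hdown : ∀ x, ∀ D ∈ I x, ∀ D' : Set X, D' ⊆ D → MeasurableSet D' → D' ∈ I x)
    (hunion : ∀ x, ∀ D : ℕ → Set X, (∀ n, D n ∈ I x) → (⋃ n, D n) ∈ I x)
    (hproper : ∀ x, {y | f y = f x} ∉ I x)
    (hquant : ∀ U : Set (X × X), MeasurableSet U → (∀ q ∈ U, f q.1 = f q.2) →
      MeasurableSet {x | {y | (x, y) ∈ U} ∉ I x}) :
    MeasurableSet (Set.range f) ∧
      ∃ g : Set.range f → X, Measurable g ∧ ∀ y : Set.range f, f (g y) = (y : Y) := by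
  rcases isEmpty_or_nonempty X with hX | hX
  · have hr : Set.range f = ∅ := range_eq_empty f
    haveI : IsEmpty ↥(Set.range f) := by
      refine ⟨fun y => ?_⟩
      obtain ⟨x, -⟩ := y.2
      exact hX.false x
    refine ⟨hr ▸ MeasurableSet.empty, fun y => isEmptyElim y, ?_, fun y => isEmptyElim y⟩
    exact measurable_of_empty _
  · -- upgrade `Y` to a Polish space
    letI := upgradeStandardBorel Y
    -- upgrade `X` to a Polish space
    letI := upgradeStandardBorel X
    -- refine the topology on `X` so that `f` becomes continuous
    obtain ⟨t', ht'le, ht'cont, ht'polish⟩ := hf.exists_continuous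
    -- install the refined topology on a copy of `X`
    letI : TopologicalSpace (Stmt19Copy X) := t'
    haveI : PolishSpace (Stmt19Copy X) := ht'polish
    letI := TopologicalSpace.upgradeIsCompletelyMetrizable (Stmt19Copy X)
    letI : MeasurableSpace (Stmt19Copy X) := ‹MeasurableSpace X›
    haveI hBC : BorelSpace (Stmt19Copy X) := by
      constructor
      exact (eq_borel_upgradeStandardBorel X).trans
        (MeasureTheory.borel_eq_borel_of_le (t := t')
          (t' := (upgradeStandardBorel X).toTopologicalSpace) ht'polish inferInstance
          ht'le).symm
    haveI : Nonempty (Stmt19Copy X) := hX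
    have hfC : Measurable (f : Stmt19Copy X → Y) := hf
    have hfibC : ∀ x : Stmt19Copy X, IsClosed {y : Stmt19Copy X | f y = f x} := by
      intro x
      have : IsClosed ((f : Stmt19Copy X → Y) ⁻¹' {f x}) :=
        IsClosed.preimage ht'cont isClosed_singleton
      exact this
    have hdiagC : MeasurableSet {p : Stmt19Copy X × Stmt19Copy X | f p.1 = f p.2} :=
      (hfC.comp measurable_fst).stronglyMeasurable.measurableSet_eq_fun
        (hfC.comp measurable_snd).stronglyMeasurable
    obtain ⟨g0, hg0m, hg0f, hg0inv⟩ :=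
      Stmt19Aux.exists_selector (X := Stmt19Copy X) (Y := Y) f hfC hfibC hdiagC I hconst
        hempty hunion hproper hquant
    -- now return to `X` with its original structure
    have hg1m : Measurable (g0 : X → X) := hg0m
    -- the transversal
    set T : Set X := {x | g0 x = x} with hT
    have hTmeas : MeasurableSet T :=
      hg1m.stronglyMeasurable.measurableSet_eq_fun measurable_id.stronglyMeasurable
    have hmemT : ∀ x : X, (g0 x : X) ∈ T := fun x => hg0inv (g0 x) x (hg0f x)
    -- `f` is injective on `T`
    have hinjT : ∀ x ∈ T, ∀ x' ∈ T, f x = f x' → x = x' := by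
      intro x hx x' hx' h
      calc x = (show X from g0 x) := hx.symm
        _ = (show X from g0 x') := hg0inv x x' h
        _ = x' := hx'
    haveI : StandardBorelSpace T := hTmeas.standardBorel
    set F : T → Y := fun t => f t with hF
    have hFmeas : Measurable F := hf.comp measurable_subtype_coe
    have hFinj : Function.Injective F := by
      rintro ⟨a, ha⟩ ⟨b, hb⟩ h
      exact Subtype.ext (hinjT a ha b hb h)
    have hFemb : MeasurableEmbedding F := hFmeas.measurableEmbedding hFinj
    have himg : ∀ s : Set X, MeasurableSet s → s ⊆ T → MeasurableSet (f '' s) := by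
      intro s hs hsT
      have h1 : MeasurableSet ((Subtype.val : T → X) ⁻¹' s) :=
        measurable_subtype_coe hs
      have h2 : MeasurableSet (F '' ((Subtype.val : T → X) ⁻¹' s)) :=
        hFemb.measurableSet_image' h1
      have h3 : F '' ((Subtype.val : T → X) ⁻¹' s) = f '' s := by
        ext y
        constructor
        · rintro ⟨⟨t, ht⟩, hts, rfl⟩
          exact ⟨t, hts, rfl⟩
        · rintro ⟨x, hxs, rfl⟩
          exact ⟨⟨x, hsT hxs⟩, hxs, rfl⟩
      rwa [h3] at h2
    have hrange : Set.range f = f '' T := by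
      apply Subset.antisymm
      · rintro y ⟨x, rfl⟩
        exact ⟨g0 x, hmemT x, hg0f x⟩
      · rintro y ⟨x, -, rfl⟩
        exact ⟨x, rfl⟩
    have hrmeas : MeasurableSet (Set.range f) := by
      rw [hrange]; exact himg T hTmeas subset_rfl
    refine ⟨hrmeas, ?_⟩
    -- the section
    set g : Set.range f → X := fun y => g0 y.2.choose with hgdef
    have hgval : ∀ y : Set.range f, f (g y) = (y : Y) := by
      intro y
      have h1 : f (y.2.choose) = (y : Y) := y.2.choose_spec
      calc f (g y) = f (y.2.choose) := hg0f _
        _ = (y : Y) := h1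
    have hgT : ∀ y : Set.range f, (g y : X) ∈ T := fun y => hmemT _
    have hguniq : ∀ (y : Set.range f) (t : X), t ∈ T → f t = (y : Y) → t = g y := by
      intro y t ht hft
      have h1 : f t = f (y.2.choose) := by rw [hft, y.2.choose_spec]
      calc t = (show X from g0 t) := ht.symm
        _ = (show X from g0 y.2.choose) := hg0inv t _ h1
        _ = g y := rfl
    refine ⟨g, ?_, hgval⟩
    intro s hs
    have key : g ⁻¹' s = (Subtype.val : Set.range f → Y) ⁻¹' (f '' (s ∩ T)) := by
      ext y
      simp only [mem_preimage]
      constructor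
      · intro hgy
        exact ⟨g y, ⟨hgy, hgT y⟩, hgval y⟩
      · rintro ⟨t, ⟨hts, htT⟩, hft⟩
        have := hguniq y t htT hft
        rwa [this] at hts
    rw [key]
    exact measurable_subtype_coe (himg (s ∩ T) (hs.inter hTmeas) inter_subset_right)
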